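/- arXiv:1708.01699 — 8 statements merged into one kernel-verified Lean document; each statement's English description precedes it below -/
import Mathlib

section
/- Let p(z) = Σ_{j=0}^{d} c_j z^j ∈ ℂ[z] be a stable polynomial with p(0) = 1 (so c_0 = 1). Then for all z ∈ ℂ, |p(z)| ≤ exp(|z|·|c_1| + 3|z|²·(|c_1|² + |c_2|)). -/
open Polynomial Complex

noncomputable def szQ (t : Multiset ℂ) : Polynomial ℂ :=
  (t.map (fun w => (1 : ℂ[X]) - Polynomial.C w * Polynomial.X)).prod

lemma szQ_cons (a : ℂ) (t : Multiset ℂ) :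
    szQ (a ::ₘ t) = (1 - Polynomial.C a * Polynomial.X) * szQ t := by
  simp [szQ]

lemma szQ_coeff0 (t : Multiset ℂ) : (szQ t).coeff 0 = 1 := by
  induction t using Multiset.induction with
  | empty => simp [szQ, Polynomial.coeff_one]
  | cons a t ih =>
    rw [szQ_cons]
    have : ((1 - Polynomial.C a * Polynomial.X) * szQ t) =
      szQ t - Polynomial.C a * (Polynomial.X * szQ t) := by ring
    rw [this]
    simp [coeff_sub, coeff_C_mul, ih, coeff_X_mul]

lemma szQ_coeff1 (t : Multiset ℂ) : (szQ t).coeff 1 = - t.sum := by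
  induction t using Multiset.induction with
  | empty => simp [szQ, Polynomial.coeff_one]
  | cons a t ih =>
    rw [szQ_cons]
    have : ((1 - Polynomial.C a * Polynomial.X) * szQ t) =
      szQ t - Polynomial.C a * (Polynomial.X * szQ t) := by ring
    rw [this]
    simp only [coeff_sub, coeff_C_mul, coeff_X_mul, ih, szQ_coeff0]
    ring_nf
    simp [Multiset.sum_cons]
    ring

lemma szQ_coeff2 (t : Multiset ℂ) :
    (t.map (fun w => w ^ 2)).sum = t.sum ^ 2 - 2 * (szQ t).coeff 2 := by
  induction t using Multiset.induction with
  | empty => simp [szQ, Polynomial.coeff_one]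
  | cons a t ih =>
    have h2 : (szQ (a ::ₘ t)).coeff 2 = (szQ t).coeff 2 - a * (szQ t).coeff 1 := by
      rw [szQ_cons]
      have : ((1 - Polynomial.C a * Polynomial.X) * szQ t) =
        szQ t - Polynomial.C a * (Polynomial.X * szQ t) := by ring
      rw [this]
      simp [coeff_sub, coeff_C_mul, coeff_X_mul]
    rw [Multiset.map_cons, Multiset.sum_cons, ih, h2, szQ_coeff1, Multiset.sum_cons]
    ring

lemma szQ_eval (t : Multiset ℂ) (z : ℂ) :
    (szQ t).eval z = (t.map (fun w => 1 - w * z)).prod := by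
  rw [szQ, eval_multiset_prod, Multiset.map_map]
  congr 1
  apply Multiset.map_congr rfl
  intro w _
  simp

lemma sz_abs_one_add (u : ℂ) :
    ‖1 + u‖ ≤ Real.exp (u.re + ‖u‖ ^ 2 / 2) := by
  have h1 : ‖1 + u‖ ^ 2 = 1 + 2 * u.re + ‖u‖ ^ 2 := by
    rw [← Complex.normSq_eq_norm_sq, ← Complex.normSq_eq_norm_sq, Complex.normSq_add]
    simp [Complex.normSq_eq_norm_sq]
    ring
  have h2 : (1 : ℝ) + (2 * u.re + ‖u‖ ^ 2) ≤
      Real.exp (2 * u.re + ‖u‖ ^ 2) := by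
    have := Real.add_one_le_exp (2 * u.re + ‖u‖ ^ 2)
    linarith
  have h3 : ‖1 + u‖ ^ 2 ≤ Real.exp (u.re + ‖u‖ ^ 2 / 2) ^ 2 := by
    rw [← Real.exp_nat_mul]
    rw [h1]
    calc 1 + 2 * u.re + ‖u‖ ^ 2
        = 1 + (2 * u.re + ‖u‖ ^ 2) := by ring
      _ ≤ Real.exp (2 * u.re + ‖u‖ ^ 2) := h2
      _ = Real.exp (2 * (u.re + ‖u‖ ^ 2 / 2)) := by ring_nf
  exact (pow_le_pow_iff_left₀ (norm_nonneg _) (Real.exp_pos _).le two_ne_zero).mp h3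

lemma sz_prod_abs_le (z : ℂ) (t : Multiset ℂ) :
    ‖(t.map (fun w => 1 - w * z)).prod‖ ≤
      Real.exp ((t.map (fun w => (-(w * z)).re + ‖w * z‖ ^ 2 / 2)).sum) := by
  induction t using Multiset.induction with
  | empty => simp
  | cons a t ih =>
    simp only [Multiset.map_cons, Multiset.prod_cons, Multiset.sum_cons]
    rw [norm_mul, Real.exp_add]
    have h1 : ‖1 - a * z‖ ≤
        Real.exp ((-(a * z)).re + ‖a * z‖ ^ 2 / 2) := by
      have := sz_abs_one_add (-(a * z))
      simpa [sub_eq_add_neg] using this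
    exact mul_le_mul h1 ih (norm_nonneg _) (Real.exp_pos _).le

lemma sz_sum_re (t : Multiset ℂ) (f : ℂ → ℂ) :
    (t.map (fun w => (f w).re)).sum = ((t.map f).sum).re := by
  induction t using Multiset.induction with
  | empty => simp
  | cons a t ih => simp [ih]

lemma sz_sum_im (t : Multiset ℂ) :
    (t.map Complex.im).sum = t.sum.im := by
  induction t using Multiset.induction with
  | empty => simp
  | cons a t ih => simp [ih]

lemma sz_sum_mul (t : Multiset ℂ) (z : ℂ) :
    (t.map (fun w => w * z)).sum = t.sum * z := by
  induction t using Multiset.induction with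
  | empty => simp
  | cons a t ih => simp [ih]; ring

lemma sz_sum_mul_right (t : Multiset ℂ) (f : ℂ → ℝ) (b : ℝ) :
    (t.map (fun w => f w * b)).sum = (t.map f).sum * b := by
  induction t using Multiset.induction with
  | empty => simp
  | cons a t ih => simp [ih]; ring

lemma sz_sum_map_add (t : Multiset ℂ) (f g : ℂ → ℝ) :
    (t.map (fun w => f w + g w)).sum = (t.map f).sum + (t.map g).sum := by
  induction t using Multiset.induction with
  | empty => simp
  | cons a s ih => simp only [Multiset.map_cons, Multiset.sum_cons, ih]; ring

lemma sz_sq_sum_le (t : Multiset ℂ) (h : ∀ w ∈ t, 0 ≤ w.im) :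
    (t.map (fun w => w.im ^ 2)).sum ≤ ((t.map Complex.im).sum) ^ 2 := by
  induction t using Multiset.induction with
  | empty => simp
  | cons a t ih =>
    have ha : 0 ≤ a.im := h a (Multiset.mem_cons_self a t)
    have ht : ∀ w ∈ t, 0 ≤ w.im := fun w hw => h w (Multiset.mem_cons_of_mem hw)
    have hsum : 0 ≤ (t.map Complex.im).sum := by
      apply Multiset.sum_nonneg
      intro x hx
      obtain ⟨w, hw, rfl⟩ := Multiset.mem_map.mp hx
      exact ht w hw
    simp only [Multiset.map_cons, Multiset.sum_cons]
    nlinarith [ih ht]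

lemma sz_abs_sq_decomp (t : Multiset ℂ) :
    (t.map (fun w => ‖w‖ ^ 2)).sum =
      ((t.map (fun w => w ^ 2)).sum).re + 2 * (t.map (fun w => w.im ^ 2)).sum := by
  induction t using Multiset.induction with
  | empty => simp
  | cons a t ih =>
    simp only [Multiset.map_cons, Multiset.sum_cons, Complex.add_re, ih]
    have : ‖a‖ ^ 2 = (a ^ 2).re + 2 * a.im ^ 2 := by
      rw [← Complex.normSq_eq_norm_sq, Complex.normSq_apply, pow_two, Complex.mul_re]
      ring
    rw [this]; ring

lemma sz_factor (p : Polynomial ℂ)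
    (hstable : ∀ z : ℂ, 0 < z.im → p.eval z ≠ 0)
    (hp0 : p.eval 0 = 1) :
    ∃ t : Multiset ℂ, (∀ w ∈ t, 0 ≤ w.im) ∧ p = szQ t := by
  have hp_ne : p ≠ 0 := by
    intro h; rw [h] at hp0; simp at hp0
  have hroot0 : ∀ r ∈ p.roots, r ≠ 0 := by
    intro r hr h0
    have := (mem_roots hp_ne).mp hr
    rw [IsRoot, h0] at this
    rw [this] at hp0
    exact one_ne_zero hp0.symm
  have hrootim : ∀ r ∈ p.roots, r.im ≤ 0 := by
    intro r hr
    by_contra h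
    push_neg at h
    exact hstable r h ((mem_roots hp_ne).mp hr)
  refine ⟨p.roots.map (fun r => r⁻¹), ?_, ?_⟩
  · intro w hw
    obtain ⟨r, hr, rfl⟩ := Multiset.mem_map.mp hw
    rw [Complex.inv_im]
    exact div_nonneg (neg_nonneg.mpr (hrootim r hr)) (Complex.normSq_nonneg r)
  · have h1 : p = Polynomial.C p.leadingCoeff * (p.roots.map fun a => X - Polynomial.C a).prod :=
      (IsAlgClosed.splits p).eq_prod_roots
    have h2 : (p.roots.map fun a => X - Polynomial.C a) =
        p.roots.map (fun a => Polynomial.C (-a) * (1 - Polynomial.C a⁻¹ * X)) := by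
      apply Multiset.map_congr rfl
      intro r hr
      have hr0 : r ≠ 0 := hroot0 r hr
      rw [mul_sub, mul_one, ← mul_assoc, ← Polynomial.C_mul]
      rw [show (-r) * r⁻¹ = -1 by field_simp]
      simp
      ring
    have h3 : p = Polynomial.C (p.leadingCoeff * (p.roots.map (fun a => -a)).prod) *
        szQ (p.roots.map (fun r => r⁻¹)) := by
      conv_lhs => rw [h1, h2]
      rw [szQ, Multiset.map_map, Multiset.prod_map_mul, Polynomial.C_mul,
        map_multiset_prod (Polynomial.C : ℂ →+* ℂ[X]), Multiset.map_map]
      simp only [Function.comp]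
      ring
    have h4 : p.leadingCoeff * (p.roots.map (fun a => -a)).prod = 1 := by
      have := hp0
      rw [h3] at this
      rw [eval_mul, eval_C, szQ_eval] at this
      simpa using this
    calc p = Polynomial.C (p.leadingCoeff * (p.roots.map (fun a => -a)).prod) *
          szQ (p.roots.map (fun r => r⁻¹)) := h3
      _ = szQ (p.roots.map (fun r => r⁻¹)) := by rw [h4]; simp

theorem szasz_inequality (p : Polynomial ℂ)
    (hstable : ∀ z : ℂ, 0 < z.im → p.eval z ≠ 0)
    (hp0 : p.eval 0 = 1) :
    ∀ z : ℂ,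
      ‖p.eval z‖ ≤
        Real.exp (‖z‖ * ‖p.coeff 1‖ +
          3 * ‖z‖ ^ 2 *
            (‖p.coeff 1‖ ^ 2 + ‖p.coeff 2‖)) := by
  obtain ⟨t, him, hpt⟩ := sz_factor p hstable hp0
  intro z
  set c1 := p.coeff 1 with hc1def
  set c2 := p.coeff 2 with hc2def
  have hsum : t.sum = -c1 := by
    have := szQ_coeff1 t
    rw [← hpt] at this
    rw [hc1def, this]; ring
  have hsq : (t.map (fun w => w ^ 2)).sum = c1 ^ 2 - 2 * c2 := by
    rw [szQ_coeff2 t, hsum, ← hpt]; ring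
  -- Step A
  have hA : ‖p.eval z‖ ≤
      Real.exp ((t.map (fun w => (-(w * z)).re + ‖w * z‖ ^ 2 / 2)).sum) := by
    rw [hpt, szQ_eval]
    exact sz_prod_abs_le z t
  -- split the exponent
  have hsplit : (t.map (fun w => (-(w * z)).re + ‖w * z‖ ^ 2 / 2)).sum =
      (c1 * z).re + (t.map (fun w => ‖w‖ ^ 2)).sum * (‖z‖ ^ 2 / 2) := by
    have e1 : (t.map (fun w => (-(w * z)).re + ‖w * z‖ ^ 2 / 2)).sum =
        (t.map (fun w => (-(w * z)).re)).sum +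
        (t.map (fun w => ‖w * z‖ ^ 2 / 2)).sum :=
      sz_sum_map_add t _ _
    have e2 : (t.map (fun w => (-(w * z)).re)).sum = (c1 * z).re := by
      have : (t.map (fun w => -(w * z))).sum = c1 * z := by
        have hmc : (t.map (fun w => -(w * z))) = (t.map (fun w => w * (-z))) := by
          apply Multiset.map_congr rfl; intro w _; ring
        rw [hmc, sz_sum_mul, hsum]; ring
      rw [sz_sum_re t (fun w => -(w * z)), this]
    have e3 : (t.map (fun w => ‖w * z‖ ^ 2 / 2)).sum =
        (t.map (fun w => ‖w‖ ^ 2)).sum * (‖z‖ ^ 2 / 2) := by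
      rw [← sz_sum_mul_right t (fun w => ‖w‖ ^ 2) (‖z‖ ^ 2 / 2)]
      apply congrArg
      apply Multiset.map_congr rfl
      intro w _
      rw [norm_mul, mul_pow]
      ring
    rw [e1, e2, e3]
  -- bound on sum of |w|^2
  have hW : (t.map (fun w => ‖w‖ ^ 2)).sum ≤
      3 * ‖c1‖ ^ 2 + 2 * ‖c2‖ := by
    have d1 := sz_abs_sq_decomp t
    have d2 : ((t.map (fun w => w ^ 2)).sum).re ≤ ‖c1‖ ^ 2 + 2 * ‖c2‖ := by
      rw [hsq]
      calc (c1 ^ 2 - 2 * c2).re ≤ ‖c1 ^ 2 - 2 * c2‖ := Complex.re_le_norm _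
        _ ≤ ‖c1 ^ 2‖ + ‖2 * c2‖ := by
            simpa only [sub_eq_add_neg, norm_neg] using norm_add_le (c1 ^ 2) (-(2 * c2))
        _ = ‖c1‖ ^ 2 + 2 * ‖c2‖ := by
            rw [norm_pow, norm_mul, Complex.norm_two]
    have d3 : (t.map (fun w => w.im ^ 2)).sum ≤ ‖c1‖ ^ 2 := by
      calc (t.map (fun w => w.im ^ 2)).sum ≤ ((t.map Complex.im).sum) ^ 2 := sz_sq_sum_le t him
        _ = (t.sum.im) ^ 2 := by rw [sz_sum_im]
        _ = c1.im ^ 2 := by rw [hsum]; simp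
        _ ≤ ‖c1‖ ^ 2 := by
            have h1 := Complex.abs_im_le_norm c1
            nlinarith [norm_nonneg c1, abs_nonneg c1.im, _root_.sq_abs c1.im]
    linarith [d1, d2, d3]
  -- finish
  refine hA.trans (Real.exp_le_exp.mpr ?_)
  rw [hsplit]
  have hre : (c1 * z).re ≤ ‖z‖ * ‖c1‖ := by
    calc (c1 * z).re ≤ ‖c1 * z‖ := Complex.re_le_norm _
      _ = ‖z‖ * ‖c1‖ := by rw [norm_mul]; ring
  have hz2 : (0 : ℝ) ≤ ‖z‖ ^ 2 / 2 := by positivity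
  have := mul_le_mul_of_nonneg_right hW hz2
  nlinarith [norm_nonneg c2, sq_nonneg (‖c1‖), sq_nonneg (‖z‖),
    norm_nonneg (p.coeff 1)]
end

section
/- Let p(z) = Σ_{j=0}^{d} p_j z^j ∈ ℂ[z] be a stable polynomial with p(0) = 1 (so p_0 = 1). Then for all z ∈ ℂ, |p(z)| ≤ exp(Re(p_1 z) + (1/2)(|p_1|² − 2 Re(p_2))|z|²). -/
open Polynomial Complex
lemma per_factor (w : ℂ) : ‖1 - w‖ ≤ Real.exp (-w.re + ‖w‖ ^ 2 / 2) := by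
  have h2 : ‖1 - w‖ ^ 2 ≤ Real.exp (-w.re + ‖w‖ ^ 2 / 2) ^ 2 := by
    have h1 : ‖1 - w‖ ^ 2 = 1 + (-2 * w.re + ‖w‖ ^ 2) := by
      rw [Complex.sq_norm, Complex.sq_norm, Complex.normSq_apply, Complex.normSq_apply]
      simp [Complex.sub_re, Complex.sub_im]
      ring
    rw [h1, ← Real.exp_nat_mul]
    calc 1 + (-2 * w.re + ‖w‖ ^ 2)
        ≤ Real.exp (-2 * w.re + ‖w‖ ^ 2) := by
          have := Real.add_one_le_exp (-2 * w.re + ‖w‖ ^ 2); linarith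
      _ = Real.exp ((2:ℕ) * (-w.re + ‖w‖ ^ 2 / 2)) := by norm_num; ring_nf
  exact (pow_le_pow_iff_left₀ (norm_nonneg _) (Real.exp_nonneg _) two_ne_zero).mp h2

-- product bound
lemma prod_bound (A : Multiset ℂ) (z : ℂ) :
    (A.map (fun a => ‖1 - a * z‖)).prod ≤
      Real.exp ((-(A.sum) * z).re + (1/2) * (A.map (fun a => ‖a‖ ^ 2)).sum * ‖z‖ ^ 2) := by
  induction A using Multiset.induction with
  | empty => simp
  | cons a A ih =>
    simp only [Multiset.map_cons, Multiset.prod_cons, Multiset.sum_cons]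
    calc ‖1 - a*z‖ * (A.map (fun a => ‖1 - a * z‖)).prod
        ≤ Real.exp (-(a*z).re + ‖a*z‖ ^ 2 / 2) *
          Real.exp ((-(A.sum) * z).re + (1/2) * (A.map (fun a => ‖a‖ ^ 2)).sum * ‖z‖ ^ 2) := by
          apply mul_le_mul (per_factor _) ih (Multiset.prod_nonneg (by
            intro x hx; obtain ⟨b, _, rfl⟩ := Multiset.mem_map.mp hx; exact norm_nonneg _))
            (Real.exp_nonneg _)
      _ = Real.exp ((-(a + A.sum) * z).re + (1/2) * (‖a‖ ^2 + (A.map (fun a => ‖a‖ ^ 2)).sum) * ‖z‖ ^ 2) := by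
          rw [← Real.exp_add]; congr 1
          simp [Complex.add_re, Complex.neg_re, Complex.mul_re, map_mul, mul_pow]
          ring
lemma coeffs (A : Multiset ℂ) :
    ((A.map (fun a => (1 : Polynomial ℂ) - C a * X)).prod).coeff 0 = 1 ∧
    ((A.map (fun a => (1 : Polynomial ℂ) - C a * X)).prod).coeff 1 = -A.sum ∧
    ((A.map (fun a => (1 : Polynomial ℂ) - C a * X)).prod).coeff 2 =
      (A.sum ^ 2 - (A.map (fun a => a ^ 2)).sum) / 2 := by
  induction A using Multiset.induction with
  | empty => simp [Polynomial.coeff_one]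
  | cons a A ih =>
    obtain ⟨h0, h1, h2⟩ := ih
    simp only [Multiset.map_cons, Multiset.prod_cons, Multiset.sum_cons]
    have e : ((1 : Polynomial ℂ) - C a * X) * (A.map (fun a => (1 : Polynomial ℂ) - C a * X)).prod
        = (A.map (fun a => (1 : Polynomial ℂ) - C a * X)).prod
          - C a * (X * (A.map (fun a => (1 : Polynomial ℂ) - C a * X)).prod) := by ring
    rw [e]
    refine ⟨?_, ?_, ?_⟩
    · simp [coeff_sub, coeff_C_mul, coeff_X_mul, h0]
    · rw [coeff_sub, coeff_C_mul, coeff_X_mul, h0, h1]; ring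
    · rw [coeff_sub, coeff_C_mul]
      have : (X * (A.map (fun a => (1 : Polynomial ℂ) - C a * X)).prod).coeff 2
          = ((A.map (fun a => (1 : Polynomial ℂ) - C a * X)).prod).coeff 1 := by
        rw [show (2:ℕ) = 1 + 1 from rfl, coeff_X_mul]
      rw [this, h1, h2]; ring
lemma im_sq (A : Multiset ℂ) (h : ∀ a ∈ A, 0 ≤ a.im) :
    0 ≤ A.sum.im ∧ (A.map (fun a => a.im ^ 2)).sum ≤ A.sum.im ^ 2 := by
  induction A using Multiset.induction with
  | empty => simp
  | cons a A ih =>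
    obtain ⟨h0, h1⟩ := ih (fun b hb => h b (Multiset.mem_cons_of_mem hb))
    have ha : 0 ≤ a.im := h a (Multiset.mem_cons_self a A)
    simp only [Multiset.map_cons, Multiset.sum_cons, Complex.add_im]
    constructor
    · linarith
    · nlinarith

lemma re_msum (B : Multiset ℂ) : B.sum.re = (B.map Complex.re).sum := by
  induction B using Multiset.induction with
  | empty => simp
  | cons b B ih => simp [ih]

lemma sq_sum_bound (A : Multiset ℂ) (h : ∀ a ∈ A, 0 ≤ a.im) :
    (A.map (fun a => ‖a‖ ^ 2)).sum ≤
      ‖A.sum‖ ^ 2 - 2 * (((A.sum ^ 2 - (A.map (fun a => a ^ 2)).sum) / 2).re) := by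
  obtain ⟨h0, h1⟩ := im_sq A h
  have key : ∀ B : Multiset ℂ, (B.map (fun a => ‖a‖ ^ 2)).sum
      = (B.map (fun a => (a^2).re)).sum + 2 * (B.map (fun a => a.im ^ 2)).sum := by
    intro B
    induction B using Multiset.induction with
    | empty => simp
    | cons b B ih =>
      simp only [Multiset.map_cons, Multiset.sum_cons, ih]
      have : ‖b‖ ^ 2 = (b^2).re + 2 * b.im ^ 2 := by
        rw [Complex.sq_norm, Complex.normSq_apply]
        simp [pow_two, Complex.mul_re]; ring
      rw [this]; ring
  have hre : ((A.map (fun a => a ^ 2)).sum).re = (A.map (fun a => (a^2).re)).sum := by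
    rw [re_msum, Multiset.map_map]; rfl
  have hS : ‖A.sum‖ ^ 2 - (A.sum ^ 2).re = 2 * A.sum.im ^ 2 := by
    rw [Complex.sq_norm, Complex.normSq_apply]
    simp [pow_two, Complex.mul_re]; ring
  rw [key A]
  have : ((A.sum ^ 2 - (A.map (fun a => a ^ 2)).sum) / 2).re
      = ((A.sum ^ 2).re - (A.map (fun a => (a^2).re)).sum) / 2 := by
    simp [Complex.div_re, Complex.sub_re, hre]
  rw [this]
  nlinarith

theorem szasz_improved (p : Polynomial ℂ)
    (hstable : ∀ z : ℂ, 0 < z.im → p.eval z ≠ 0)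
    (hp0 : p.eval 0 = 1) :
    ∀ z : ℂ,
      ‖p.eval z‖ ≤
        Real.exp ((p.coeff 1 * z).re +
          (1 / 2) * (‖p.coeff 1‖ ^ 2 - 2 * (p.coeff 2).re) *
            ‖z‖ ^ 2) := by
  intro z
  have hpne : p ≠ 0 := fun h => by simp [h] at hp0
  set R := p.roots with hR
  have hr0 : ∀ r ∈ R, r ≠ 0 := by
    rintro r hr rfl
    have := (Polynomial.mem_roots hpne).mp hr
    rw [Polynomial.IsRoot] at this
    exact one_ne_zero (hp0 ▸ this)
  have hrim : ∀ r ∈ R, r.im ≤ 0 := by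
    intro r hr
    by_contra h
    push_neg at h
    exact hstable r h ((Polynomial.mem_roots hpne).mp hr)
  have hsplit : p = C p.leadingCoeff * (R.map (fun r => X - C r)).prod :=
    (IsAlgClosed.splits p).eq_prod_roots
  -- evaluate at 0
  have hlc : p.leadingCoeff * (R.map (fun r => -r)).prod = 1 := by
    have := hp0
    rw [hsplit] at this
    simpa [Polynomial.eval_multiset_prod, Multiset.map_map] using this
  -- factorization in terms of inverses of roots
  have hfact : p = (R.map (fun r => (1 : Polynomial ℂ) - C r⁻¹ * X)).prod := by
    have step1 : (R.map (fun r => (1 : Polynomial ℂ) - C r⁻¹ * X))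
        = (R.map (fun r => C (-r⁻¹) * (X - C r))) := by
      apply Multiset.map_congr rfl
      intro r hr
      have hr' : r ≠ 0 := hr0 r hr
      have h1 : C (-r⁻¹) * (X - C r) = C (-r⁻¹) * X - C (-r⁻¹ * r) := by
        rw [Polynomial.C_mul]; ring
      rw [h1, show -r⁻¹ * r = -1 by field_simp]
      simp
      ring
    rw [step1, Multiset.prod_map_mul]
    have h2 : (R.map (fun r => C (-r⁻¹))).prod = C ((R.map (fun r => -r⁻¹)).prod) := by
      rw [map_multiset_prod (C : ℂ →+* Polynomial ℂ), Multiset.map_map]; rfl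
    rw [h2]
    have hinv : (R.map (fun r => -r⁻¹)).prod = ((R.map (fun r => -r)).prod)⁻¹ := by
      rw [show R.map (fun r => -r⁻¹) = R.map (fun r => (-r)⁻¹) from
        Multiset.map_congr rfl (fun r _ => inv_neg.symm), Multiset.prod_map_inv]
    rw [hinv,
      show ((R.map fun r => -r).prod)⁻¹ = p.leadingCoeff from
        inv_eq_of_mul_eq_one_right (by rw [mul_comm]; exact hlc)]
    exact hsplit
  set A : Multiset ℂ := R.map (fun r => r⁻¹) with hAdef
  have hAfact : p = (A.map (fun a => (1 : Polynomial ℂ) - C a * X)).prod := by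
    rw [hAdef, Multiset.map_map]; exact hfact
  have hA : ∀ a ∈ A, 0 ≤ a.im := by
    intro a ha
    obtain ⟨r, hr, rfl⟩ := Multiset.mem_map.mp ha
    rw [Complex.inv_im]
    apply div_nonneg (by linarith [hrim r hr])
    exact Complex.normSq_nonneg r
  obtain ⟨hc0, hc1, hc2⟩ := coeffs A
  have hC1 : p.coeff 1 = -A.sum := by conv_lhs => rw [hAfact]; rw [hc1]
  have hC2 : p.coeff 2 = (A.sum ^ 2 - (A.map (fun a => a ^ 2)).sum) / 2 := by
    conv_lhs => rw [hAfact]; rw [hc2]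
  have heval : ‖p.eval z‖ = (A.map (fun a => ‖1 - a * z‖)).prod := by
    rw [hAfact, Polynomial.eval_multiset_prod, (show ∀ m : Multiset ℂ, ‖m.prod‖ = (m.map (fun x => ‖x‖)).prod from
        fun m => map_multiset_prod (normHom : ℂ →*₀ ℝ) m),
      Multiset.map_map, Multiset.map_map]
    apply congrArg
    apply Multiset.map_congr rfl
    intro a _
    simp
  rw [heval]
  calc (A.map (fun a => ‖1 - a * z‖)).prod
      ≤ Real.exp ((-(A.sum) * z).re +
          (1/2) * (A.map (fun a => ‖a‖ ^ 2)).sum * ‖z‖ ^ 2) :=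
        prod_bound A z
    _ ≤ Real.exp ((p.coeff 1 * z).re +
          (1 / 2) * (‖p.coeff 1‖ ^ 2 - 2 * (p.coeff 2).re) * ‖z‖ ^ 2) := by
        apply Real.exp_le_exp.mpr
        have e1 : (p.coeff 1 * z).re = (-(A.sum) * z).re := by rw [hC1]
        have e2 : ‖p.coeff 1‖ ^ 2 = ‖A.sum‖ ^ 2 := by
          rw [hC1, norm_neg]
        have hb := sq_sum_bound A hA
        have hz : (0:ℝ) ≤ ‖z‖ ^ 2 := sq_nonneg _
        rw [e1, e2, hC2]
        nlinarith [hb, hz]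
end

section
/- Let c_1, c_2 ∈ ℝ with γ := (c_1² − 2c_2)/2 > 0. Then there exists a sequence of stable polynomials p_n ∈ ℝ[z] with constant coefficient 1, coefficient of z equal to c_1, and coefficient of z² equal to c_2, such that for every y ∈ ℝ, lim_{n→∞} |p_n(iy)| = exp(γ y²). -/
open Polynomial Filter Topology

lemma coeff_mul_one' (p q : ℝ[X]) :
    (p * q).coeff 1 = p.coeff 0 * q.coeff 1 + p.coeff 1 * q.coeff 0 := by
  rw [Polynomial.coeff_mul, Finset.Nat.sum_antidiagonal_eq_sum_range_succ_mk]
  simp [Finset.sum_range_succ]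

lemma coeff_mul_two' (p q : ℝ[X]) :
    (p * q).coeff 2 = p.coeff 0 * q.coeff 2 + p.coeff 1 * q.coeff 1 + p.coeff 2 * q.coeff 0 := by
  rw [Polynomial.coeff_mul, Finset.Nat.sum_antidiagonal_eq_sum_range_succ_mk]
  simp [Finset.sum_range_succ]

lemma pow_coeff012 (q : ℝ[X]) (h0 : q.coeff 0 = 1) (k : ℕ) :
    (q ^ k).coeff 0 = 1 ∧ (q ^ k).coeff 1 = k * q.coeff 1 ∧
      (q ^ k).coeff 2 = k * q.coeff 2 + (k * (k - 1) : ℝ) / 2 * q.coeff 1 ^ 2 := by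
  induction k with
  | zero => simp [Polynomial.coeff_one]
  | succ k ih =>
    obtain ⟨i0, i1, i2⟩ := ih
    rw [pow_succ]
    refine ⟨?_, ?_, ?_⟩
    · rw [Polynomial.mul_coeff_zero, i0, h0, one_mul]
    · rw [coeff_mul_one', i0, i1, h0]
      push_cast
      ring
    · rw [coeff_mul_two', i0, i1, i2, h0]
      push_cast
      ring

lemma quad_eq (a b : ℝ) :
    (1 + C a * X) * (1 + C b * X) = 1 + C (a + b) * X + C (a * b) * X ^ 2 := by
  simp only [C_add, C_mul]
  ring

lemma quad_coeff0 (a b : ℝ) : ((1 + C a * X) * (1 + C b * X)).coeff 0 = 1 := by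
  rw [quad_eq]; simp [Polynomial.coeff_one]

lemma quad_coeff1 (a b : ℝ) : ((1 + C a * X) * (1 + C b * X)).coeff 1 = a + b := by
  rw [quad_eq]; simp [Polynomial.coeff_one, coeff_X, mul_assoc, coeff_C_mul, coeff_X_pow]

lemma quad_coeff2 (a b : ℝ) : ((1 + C a * X) * (1 + C b * X)).coeff 2 = a * b := by
  rw [quad_eq]; simp [Polynomial.coeff_one, coeff_X, mul_assoc, coeff_C_mul, coeff_X_pow]

lemma quad_eval (a b : ℝ) (z : ℂ) :
    (((1 + C a * X) * (1 + C b * X)).map (algebraMap ℝ ℂ)).eval z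
      = (1 + (a : ℂ) * z) * (1 + (b : ℂ) * z) := by
  simp [Polynomial.map_mul, Polynomial.map_add]

lemma quad_stable (a b : ℝ) (z : ℂ) (hz : 0 < z.im) :
    (((1 + C a * X) * (1 + C b * X)).map (algebraMap ℝ ℂ)).eval z ≠ 0 := by
  rw [quad_eval]
  refine mul_ne_zero ?_ ?_ <;>
  · intro h
    have him := congrArg Complex.im h
    have hre := congrArg Complex.re h
    simp [Complex.add_im, Complex.add_re, Complex.mul_im, Complex.mul_re] at him hre
    rcases him with h0 | h0
    · rw [h0] at hre; simp at hre
    · exact absurd h0 (ne_of_gt hz)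

lemma quad_abs (a b y : ℝ) :
    ‖((((1 + C a * X) * (1 + C b * X)).map (algebraMap ℝ ℂ)).eval (Complex.I * y))‖
      = Real.sqrt ((1 + a ^ 2 * y ^ 2) * (1 + b ^ 2 * y ^ 2)) := by
  rw [quad_eval, norm_mul]
  have h : ∀ t : ℝ, ‖(1 + (t : ℂ) * (Complex.I * y))‖ = Real.sqrt (1 + t ^ 2 * y ^ 2) := by
    intro t
    rw [Complex.norm_def, Complex.normSq_apply]
    norm_num [Complex.add_re, Complex.add_im, Complex.mul_re, Complex.mul_im]
    ring_nf
  rw [h, h, ← Real.sqrt_mul (by positivity)]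

lemma tendsto_sqrt_pow_exp (A : ℕ → ℝ) (K : ℕ → ℕ) (L : ℝ)
    (hA1 : ∀ n, 1 < A n)
    (h1 : Tendsto (fun n => (K n : ℝ) * (A n - 1)) atTop (nhds (2 * L)))
    (hAlim : Tendsto A atTop (nhds 1)) :
    Tendsto (fun n => Real.sqrt (A n) ^ K n) atTop (nhds (Real.exp L)) := by
  have hA_ne : Tendsto A atTop (𝓝[≠] (1:ℝ)) :=
    tendsto_nhdsWithin_of_tendsto_nhds_of_eventually_within _ hAlim
      (Eventually.of_forall fun n => (hA1 n).ne')
  have hslope : Tendsto (slope Real.log 1) (𝓝[≠] (1:ℝ)) (nhds 1) := by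
    have h := hasDerivAt_iff_tendsto_slope.mp (Real.hasDerivAt_log one_ne_zero)
    simpa using h
  have hratio : Tendsto (fun n => Real.log (A n) / (A n - 1)) atTop (nhds 1) := by
    have := hslope.comp hA_ne
    convert this using 2 with n
    simp [slope_def_field, Real.log_one]
  have hmain : Tendsto (fun n => (K n : ℝ) / 2 * Real.log (A n)) atTop (nhds L) := by
    have h2 : Tendsto (fun n => ((K n : ℝ) * (A n - 1) / 2) *
        (Real.log (A n) / (A n - 1))) atTop (nhds (2 * L / 2 * 1)) :=
      (h1.div_const 2).mul hratio
    rw [show 2 * L / 2 * 1 = L by ring] at h2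
    convert h2 using 2 with n
    have hne : A n - 1 ≠ 0 := sub_ne_zero.mpr (hA1 n).ne'
    field_simp
  have := (Real.continuous_exp.tendsto L).comp hmain
  convert this using 2 with n
  have hApos : (0:ℝ) < A n := lt_trans one_pos (hA1 n)
  have hspos : (0:ℝ) < Real.sqrt (A n) ^ K n := pow_pos (Real.sqrt_pos.mpr hApos) _
  rw [← Real.exp_log hspos, Real.log_pow, Real.log_sqrt hApos.le]
  norm_num
  ring_nf

theorem szasz_sharpness (c₁ c₂ : ℝ) (hγ : 0 < (c₁ ^ 2 - 2 * c₂) / 2) :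
    ∃ p : ℕ → Polynomial ℝ,
      (∀ n, ∀ z : ℂ, 0 < z.im → ((p n).map (algebraMap ℝ ℂ)).eval z ≠ 0) ∧
      (∀ n, (p n).coeff 0 = 1) ∧
      (∀ n, (p n).coeff 1 = c₁) ∧
      (∀ n, (p n).coeff 2 = c₂) ∧
      (∀ y : ℝ,
        Tendsto
          (fun n => ‖((p n).map (algebraMap ℝ ℂ)).eval (Complex.I * y)‖)
          atTop (nhds (Real.exp ((c₁ ^ 2 - 2 * c₂) / 2 * y ^ 2)))) := by
  set γ : ℝ := (c₁ ^ 2 - 2 * c₂) / 2 with hγdef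
  set N : ℕ := ⌈c₁ ^ 2 / (4 * γ)⌉₊ + 1 with hNdef
  set K : ℕ → ℕ := fun n => n + N with hKdef
  set κ : ℕ → ℝ := fun n => (K n : ℝ) with hκdef
  have hκ1 : ∀ n, (1:ℝ) ≤ κ n := by
    intro n
    have h : 1 ≤ K n := by simp [hKdef, hNdef]; omega
    simp only [hκdef]
    exact_mod_cast h
  have hκ0 : ∀ n, (0:ℝ) < κ n := fun n => lt_of_lt_of_le one_pos (hκ1 n)
  set α : ℕ → ℝ := fun n => c₁ / κ n with hαdef
  set β : ℕ → ℝ := fun n => c₂ / κ n - (κ n - 1) * c₁ ^ 2 / (2 * κ n ^ 2) with hβdef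
  set D : ℕ → ℝ := fun n => α n ^ 2 - 4 * β n with hDdef
  have hDval : ∀ n, D n = (4 * γ * κ n - c₁ ^ 2) / κ n ^ 2 := by
    intro n
    simp only [hDdef, hαdef, hβdef, hγdef]
    field_simp
    ring
  have hDpos : ∀ n, 0 < D n := by
    intro n
    rw [hDval n]
    apply div_pos _ (by positivity)
    have hceil : c₁ ^ 2 / (4 * γ) ≤ (⌈c₁ ^ 2 / (4 * γ)⌉₊ : ℝ) := Nat.le_ceil _
    have hN : (⌈c₁ ^ 2 / (4 * γ)⌉₊ : ℝ) + 1 ≤ κ n := by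
      have hKN : N ≤ K n := by simp [hKdef]
      have h2 : (N : ℝ) ≤ κ n := by simp only [hκdef]; exact_mod_cast hKN
      have h3 : ((⌈c₁ ^ 2 / (4 * γ)⌉₊ : ℝ) + 1) = (N : ℝ) := by
        simp only [hNdef]; push_cast; ring
      linarith
    have hlt : c₁ ^ 2 / (4 * γ) < κ n := by linarith
    have h4γ : (0:ℝ) < 4 * γ := by linarith
    rw [div_lt_iff₀ h4γ] at hlt
    linarith
  set u : ℕ → ℝ := fun n => (α n + Real.sqrt (D n)) / 2 with hudef
  set v : ℕ → ℝ := fun n => (α n - Real.sqrt (D n)) / 2 with hvdef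
  have hsum : ∀ n, u n + v n = α n := by intro n; simp [hudef, hvdef]; ring
  have hprod : ∀ n, u n * v n = β n := by
    intro n
    have : u n * v n = (α n ^ 2 - Real.sqrt (D n) ^ 2) / 4 := by simp [hudef, hvdef]; ring
    rw [this, Real.sq_sqrt (hDpos n).le, hDdef]
    ring
  have hsumsq : ∀ n, u n ^ 2 + v n ^ 2 = 2 * γ / κ n := by
    intro n
    have h1 : u n ^ 2 + v n ^ 2 = α n ^ 2 - 2 * β n := by
      rw [← hsum n, ← hprod n]; ring
    rw [h1]
    simp only [hαdef, hβdef, hγdef]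
    have := (hκ0 n).ne'
    field_simp
    ring
  refine ⟨fun n => ((1 + C (u n) * X) * (1 + C (v n) * X)) ^ (K n), ?_, ?_, ?_, ?_, ?_⟩
  · intro n z hz
    rw [Polynomial.map_pow, Polynomial.eval_pow]
    exact pow_ne_zero _ (quad_stable _ _ z hz)
  · intro n
    exact (pow_coeff012 _ (quad_coeff0 _ _) (K n)).1
  · intro n
    rw [(pow_coeff012 _ (quad_coeff0 _ _) (K n)).2.1, quad_coeff1, hsum n, hαdef]
    have := (hκ0 n).ne'
    field_simp [hκdef]
    rw [mul_comm]
  · intro n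
    rw [(pow_coeff012 _ (quad_coeff0 _ _) (K n)).2.2, quad_coeff2, quad_coeff1,
      hsum n, hprod n]
    have hκn : ((K n : ℝ)) = κ n := rfl
    rw [hκn, hαdef, hβdef]
    have := (hκ0 n).ne'
    field_simp
    ring
  · intro y
    set A : ℕ → ℝ := fun n => (1 + u n ^ 2 * y ^ 2) * (1 + v n ^ 2 * y ^ 2) with hAdef
    have habs : ∀ n, ‖((((1 + C (u n) * X) * (1 + C (v n) * X)) ^ (K n)).map
        (algebraMap ℝ ℂ) |>.eval (Complex.I * y))‖ = Real.sqrt (A n) ^ K n := by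
      intro n
      rw [Polynomial.map_pow, Polynomial.eval_pow, norm_pow, quad_abs]
    simp only [habs]
    have hAval : ∀ n, A n = 1 + (2 * γ / κ n) * y ^ 2 + (β n) ^ 2 * y ^ 4 := by
      intro n
      have : A n = 1 + (u n ^ 2 + v n ^ 2) * y ^ 2 + (u n * v n) ^ 2 * y ^ 4 := by
        simp only [hAdef]; ring
      rw [this, hsumsq n, hprod n]
    rcases eq_or_ne y 0 with rfl | hy
    · have : ∀ n, A n = 1 := by intro n; rw [hAval]; ring
      simp only [this, Real.sqrt_one, one_pow]
      norm_num
    · -- y ≠ 0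
      have hκtop : Tendsto κ atTop atTop := by
        simp only [hκdef, hKdef]
        exact tendsto_natCast_atTop_atTop.comp (tendsto_add_atTop_nat N)
      set ε : ℕ → ℝ := fun n => 1 / κ n with hεdef
      have hε : Tendsto ε atTop (nhds 0) := by
        simpa [hεdef, one_div, Pi.inv_def] using hκtop.inv_tendsto_atTop
      set g : ℕ → ℝ := fun n => c₂ - (1 - ε n) * c₁ ^ 2 / 2 with hgdef
      have hg : Tendsto g atTop (nhds (c₂ - (1 - 0) * c₁ ^ 2 / 2)) := by
        apply Tendsto.const_sub
        exact ((tendsto_const_nhds.sub hε).mul_const _).div_const _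
      have hβeq : ∀ n, β n = ε n * g n := by
        intro n
        simp only [hβdef, hεdef, hgdef]
        have := (hκ0 n).ne'
        field_simp
      have hkβ2 : Tendsto (fun n => κ n * β n ^ 2) atTop (nhds 0) := by
        have heq : ∀ n, κ n * β n ^ 2 = ε n * g n ^ 2 := by
          intro n
          rw [hβeq n]
          simp only [hεdef]
          have := (hκ0 n).ne'
          field_simp
        simp only [heq]
        simpa using hε.mul (hg.pow 2)
      have h1 : Tendsto (fun n => κ n * (A n - 1)) atTop (nhds (2 * (γ * y ^ 2))) := by
        have heq : ∀ n, κ n * (A n - 1) = 2 * γ * y ^ 2 + (κ n * β n ^ 2) * y ^ 4 := by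
          intro n
          rw [hAval n]
          have := (hκ0 n).ne'
          field_simp
          ring
        simp only [heq]
        have ht := (hkβ2.mul_const (y ^ 4)).const_add (2 * γ * y ^ 2)
        rw [show (2 * (γ * y ^ 2) : ℝ) = 2 * γ * y ^ 2 + 0 * y ^ 4 by ring]
        exact ht
      have hA1 : ∀ n, 1 < A n := by
        intro n
        have hβy : 0 ≤ β n ^ 2 * y ^ 4 := by positivity
        have hγκ : 0 < 2 * γ / κ n * y ^ 2 :=
          mul_pos (div_pos (by linarith) (hκ0 n)) (by positivity)
        rw [hAval n]
        have key : ∀ a b : ℝ, 0 < a → 0 ≤ b → 1 < 1 + a + b := by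
          intro a b ha hb; linarith
        exact key _ _ hγκ hβy
      have hAlim : Tendsto A atTop (nhds 1) := by
        have heq : ∀ n, A n = 1 + ε n * (κ n * (A n - 1)) := by
          intro n
          simp only [hεdef]
          have := (hκ0 n).ne'
          field_simp
          ring
        have hfe : (fun n => 1 + ε n * (κ n * (A n - 1))) = A := funext fun n => (heq n).symm
        have ht := (hε.mul h1).const_add (1:ℝ)
        rw [hfe] at ht
        simpa using ht
      exact tendsto_sqrt_pow_exp A K (γ * y ^ 2) hA1 h1 hAlim
end

section
/- Let α₁, …, α_d ∈ ℂ with Im α_j ≤ 0 for all j, and set p₁ = Σ_{j=1}^{d} α_j and p₂ = Σ_{j<k} α_j α_k. Then Σ_{j=1}^{d} |α_j|² ≤ 2|Σ_{j=1}^{d} α_j|² + |Σ_{j=1}^{d} α_j²|, and consequently Σ_{j=1}^{d} |α_j|² ≤ 3|p₁|² + 2|p₂|. -/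
open Finset

lemma szasz_sq_sum_id (d : ℕ) (α : Fin d → ℂ) :
    (∑ j, α j) ^ 2 = (∑ j, α j ^ 2) + 2 * ∑ j, ∑ k ∈ Finset.Ioi j, α j * α k := by
  have h1 : (∑ j, α j) ^ 2 = ∑ j : Fin d, ∑ k : Fin d, α j * α k := by
    rw [sq, Finset.sum_mul_sum]
  have h2 : ∀ j : Fin d, (∑ k : Fin d, α j * α k)
      = α j * α j + ((∑ k ∈ Finset.Ioi j, α j * α k) + ∑ k ∈ Finset.Iio j, α j * α k) := by
    intro j
    have hu : (Finset.univ : Finset (Fin d)) = insert j (({j} : Finset (Fin d))ᶜ) := by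
      rw [Finset.insert_compl_self]
    have hset : ({j} : Finset (Fin d))ᶜ = Finset.Ioi j ∪ Finset.Iio j := by
      ext k
      simp only [Finset.mem_compl, Finset.mem_singleton, Finset.mem_union, Finset.mem_Ioi,
        Finset.mem_Iio]
      constructor
      · intro h; exact (lt_or_gt_of_ne (Ne.symm h)).imp id id
      · rintro (h | h) rfl <;> exact absurd h (lt_irrefl _)
    rw [hu, Finset.sum_insert (by simp), hset,
      Finset.sum_union (Finset.disjoint_Ioi_Iio j)]
  have h3 : (∑ j : Fin d, ∑ k ∈ Finset.Iio j, α j * α k)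
      = ∑ j : Fin d, ∑ k ∈ Finset.Ioi j, α j * α k := by
    rw [Finset.sum_comm' (s' := fun k => Finset.Ioi k) (t' := Finset.univ)
      (by intro x y; simp [and_comm])]
    exact Finset.sum_congr rfl fun j _ => Finset.sum_congr rfl fun k _ => mul_comm _ _
  rw [h1]
  simp only [h2]
  rw [Finset.sum_add_distrib, Finset.sum_add_distrib, h3]
  simp only [← sq]
  ring

theorem szasz_coefficient_bound (d : ℕ) (α : Fin d → ℂ)
    (hα : ∀ j, (α j).im ≤ 0) :
    (∑ j, ‖α j‖ ^ 2 ≤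
      2 * ‖∑ j, α j‖ ^ 2 + ‖∑ j, α j ^ 2‖) ∧
    (∑ j, ‖α j‖ ^ 2 ≤
      3 * ‖∑ j, α j‖ ^ 2 +
        2 * ‖∑ j, ∑ k ∈ Finset.Ioi j, α j * α k‖) := by
  have habs : ∀ j, ‖α j‖ ^ 2 = (α j).re ^ 2 + (α j).im ^ 2 := fun j => by
    rw [Complex.sq_norm, Complex.normSq_apply]; ring
  have hre : (∑ j, α j ^ 2).re = ∑ j, ((α j).re ^ 2 - (α j).im ^ 2) := by
    rw [Complex.re_sum]
    exact Finset.sum_congr rfl fun j _ => by rw [sq, Complex.mul_re]; ring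
  have e1 : ∑ j, ‖α j‖ ^ 2
      = (∑ j, α j ^ 2).re + 2 * ∑ j, (α j).im ^ 2 := by
    rw [hre, Finset.sum_sub_distrib]
    calc ∑ j, ‖α j‖ ^ 2 = ∑ j, ((α j).re ^ 2 + (α j).im ^ 2) :=
          Finset.sum_congr rfl fun j _ => habs j
      _ = _ := by rw [Finset.sum_add_distrib]; ring
  have hb : ∑ j, (α j).im ^ 2 ≤ (∑ j, (α j).im) ^ 2 := by
    have h := Finset.sum_sq_le_sq_sum_of_nonneg (s := Finset.univ)
      (f := fun j => -(α j).im) (fun i _ => neg_nonneg.2 (hα i))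
    calc ∑ j, (α j).im ^ 2 = ∑ j, (-(α j).im) ^ 2 := by simp
      _ ≤ (∑ j, -(α j).im) ^ 2 := h
      _ = (∑ j, (α j).im) ^ 2 := by rw [Finset.sum_neg_distrib, neg_sq]
  have hIm : (∑ j, (α j).im) ^ 2 ≤ ‖∑ j, α j‖ ^ 2 := by
    rw [← Complex.im_sum]
    calc ((∑ j, α j).im) ^ 2 = |(∑ j, α j).im| ^ 2 := (sq_abs _).symm
      _ ≤ ‖∑ j, α j‖ ^ 2 :=
          pow_le_pow_left₀ (abs_nonneg _) (Complex.abs_im_le_norm _) 2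
  have hReAbs := Complex.re_le_norm (∑ j, α j ^ 2)
  have first : ∑ j, ‖α j‖ ^ 2 ≤
      2 * ‖∑ j, α j‖ ^ 2 + ‖∑ j, α j ^ 2‖ := by
    linarith
  refine ⟨first, ?_⟩
  have hid := szasz_sq_sum_id d α
  have hS2 : ‖∑ j, α j ^ 2‖ ≤ ‖∑ j, α j‖ ^ 2
      + 2 * ‖∑ j, ∑ k ∈ Finset.Ioi j, α j * α k‖ := by
    have : (∑ j, α j ^ 2) = (∑ j, α j) ^ 2 - 2 * ∑ j, ∑ k ∈ Finset.Ioi j, α j * α k := by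
      rw [hid]; ring
    rw [this]
    calc ‖(∑ j, α j) ^ 2 - 2 * ∑ j, ∑ k ∈ Finset.Ioi j, α j * α k‖
        ≤ ‖(∑ j, α j) ^ 2‖
          + ‖2 * ∑ j, ∑ k ∈ Finset.Ioi j, α j * α k‖ := by
          exact norm_sub_le _ _
      _ = ‖∑ j, α j‖ ^ 2
          + 2 * ‖∑ j, ∑ k ∈ Finset.Ioi j, α j * α k‖ := by
          rw [norm_pow, norm_mul, Complex.norm_two]
  linarith
end

section
/- Let M be a square complex matrix with Im M := (M − M*)/(2i) positive semidefinite. Then tr(M*M) ≤ |tr M|² − Re( (tr M)² − tr(M²) ). -/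
open Matrix
open scoped ComplexOrder

lemma trace_sq_le_sq_trace_of_psd {d : ℕ} {B : Matrix (Fin d) (Fin d) ℂ}
    (hB : B.PosSemidef) : ((B * B).trace).re ≤ (B.trace.re) ^ 2 := by
  have hH := hB.1
  set U : Matrix (Fin d) (Fin d) ℂ := (hH.eigenvectorUnitary : Matrix (Fin d) (Fin d) ℂ)
  set D : Matrix (Fin d) (Fin d) ℂ := diagonal (RCLike.ofReal ∘ hH.eigenvalues)
  have hUU : star U * U = 1 := Unitary.coe_star_mul_self hH.eigenvectorUnitary
  have hspec : B = U * D * star U := hH.spectral_theorem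
  have htr : B.trace = D.trace := by
    rw [hspec, trace_mul_cycle, hUU, one_mul]
  have htr2 : (B * B).trace = (D * D).trace := by
    have : B * B = U * (D * D) * star U := by
      rw [hspec]
      have e : U * D * star U * (U * D * star U)
          = U * (D * (star U * U) * D) * star U := by noncomm_ring
      rw [e, hUU]
      simp only [mul_one]
    rw [this, trace_mul_cycle, hUU, one_mul]
  have hDD : D * D = diagonal (fun i => ((hH.eigenvalues i : ℂ)) ^ 2) := by
    rw [diagonal_mul_diagonal]
    congr 1 with i
    simp [sq]
  rw [htr, htr2, hDD, trace_diagonal, trace_diagonal]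
  have h1 : (∑ i, ((hH.eigenvalues i : ℂ)) ^ 2).re = ∑ i, (hH.eigenvalues i) ^ 2 := by
    simp [← Complex.ofReal_pow]
  have h2 : (∑ i, ((hH.eigenvalues i : ℂ))).re = ∑ i, hH.eigenvalues i := by
    simp
  simp only [Function.comp] at h1 h2 ⊢
  rw [h1]
  rw [show (∑ i, ((RCLike.ofReal (hH.eigenvalues i) : ℂ))).re
      = ∑ i, hH.eigenvalues i from h2]
  exact Finset.sum_sq_le_sq_sum_of_nonneg (fun i _ => hB.eigenvalues_nonneg i)

theorem trace_sq_ineq_of_im_psd (d : ℕ) (M : Matrix (Fin d) (Fin d) ℂ)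
    (hM : ((2 * Complex.I)⁻¹ • (M - Mᴴ)).PosSemidef) :
    ((Mᴴ * M).trace).re ≤
      ‖M.trace‖ ^ 2 - (M.trace ^ 2 - (M * M).trace).re := by
  set B := (2 * Complex.I)⁻¹ • (M - Mᴴ) with hBdef
  have key := trace_sq_le_sq_trace_of_psd hM
  -- trace of B
  have htrB : B.trace = (2 * Complex.I)⁻¹ * (M.trace - star M.trace) := by
    rw [hBdef, trace_smul, trace_sub, trace_conjTranspose, smul_eq_mul]
  have htrBB : (B * B).trace =
      (2 * Complex.I)⁻¹ ^ 2 * ((M * M).trace + star ((M * M).trace)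
        - 2 * (Mᴴ * M).trace) := by
    have hBB : B * B = ((2 * Complex.I)⁻¹ ^ 2) • ((M - Mᴴ) * (M - Mᴴ)) := by
      rw [hBdef, smul_mul_smul_comm, sq]
    rw [hBB, trace_smul, smul_eq_mul]
    congr 1
    have : (M - Mᴴ) * (M - Mᴴ) = M * M - M * Mᴴ - Mᴴ * M + Mᴴ * Mᴴ := by
      noncomm_ring
    rw [this, trace_add, trace_sub, trace_sub]
    rw [trace_mul_comm M Mᴴ]
    have : (Mᴴ * Mᴴ).trace = star ((M * M).trace) := by
      rw [← conjTranspose_mul, trace_conjTranspose]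
    rw [this]
    ring
  rw [htrBB, htrB] at key
  set t := M.trace
  set u := (M * M).trace
  set r := (Mᴴ * M).trace
  have habs : ‖t‖ ^ 2 = t.re ^ 2 + t.im ^ 2 := by
    rw [Complex.sq_norm, Complex.normSq_apply]; ring
  have hlhs : ((2 * Complex.I)⁻¹ ^ 2 * (u + star u - 2 * r)).re
      = (r.re - u.re) / 2 := by
    have : (2 * Complex.I)⁻¹ ^ 2 = (-4 : ℂ)⁻¹ := by
      rw [inv_pow]
      norm_num [mul_pow, Complex.I_sq]
    rw [this]
    simp [Complex.ext_iff]
    ring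
  have hrhs : ((2 * Complex.I)⁻¹ * (t - star t)).re = t.im := by
    have : (2 * Complex.I)⁻¹ * (t - star t)
        = (t - star t) / (2 * Complex.I) := by ring
    rw [this]
    simp [Complex.ext_iff, Complex.div_re, Complex.normSq_apply]
    ring
  rw [hlhs, hrhs] at key
  have : (t ^ 2 - u).re = t.re ^ 2 - t.im ^ 2 - u.re := by
    simp [sq, Complex.mul_re]
  rw [habs, this]
  linarith
end

section
/- Let A be a d×d complex matrix with Im A := (A − A*)/(2i) positive semidefinite, and suppose the kernel of A (the eigenspace for eigenvalue 0) has dimension s. Then there exists a d×d unitary matrix U such that U* A U is block diagonal of the form diag(0_s, C), where 0_s is the s×s zero matrix and C is an invertible (d−s)×(d−s) matrix with Im C positive semidefinite. -/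
open Matrix
open scoped ComplexOrder InnerProductSpace

theorem block_diagonalize_of_im_psd (d s : ℕ) (A : Matrix (Fin d) (Fin d) ℂ)
    (hA : ((2 * Complex.I)⁻¹ • (A - Aᴴ)).PosSemidef)
    (hs : Module.finrank ℂ (LinearMap.ker (Matrix.toLin' A)) = s) :
    ∃ U : Matrix (Fin d) (Fin d) ℂ, U ∈ Matrix.unitaryGroup (Fin d) ℂ ∧
      ∃ (C : Matrix (Fin (d - s)) (Fin (d - s)) ℂ)
        (e : (Fin s ⊕ Fin (d - s)) ≃ Fin d),
        IsUnit C.det ∧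
        ((2 * Complex.I)⁻¹ • (C - Cᴴ)).PosSemidef ∧
        Uᴴ * A * U =
          Matrix.submatrix (Matrix.fromBlocks 0 0 0 C) e.symm e.symm := by
  classical
  set E := EuclideanSpace ℂ (Fin d)
  set K : Submodule ℂ E := LinearMap.ker (Matrix.toEuclideanLin A) with hK
  have hKmem : ∀ x : E, x ∈ K ↔ A *ᵥ x = 0 := fun x => by
    rw [hK, LinearMap.mem_ker, Matrix.toEuclideanLin_apply, WithLp.toLp_eq_zero]
  have hKrank : Module.finrank ℂ K = s := by
    have hKc : K = (LinearMap.ker (Matrix.toLin' A)).comap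
        (WithLp.linearEquiv 2 ℂ (Fin d → ℂ)).toLinearMap := by
      ext x
      rw [hKmem, Submodule.mem_comap, LinearEquiv.coe_coe, WithLp.coe_linearEquiv,
        LinearMap.mem_ker, Matrix.toLin'_apply]
    rw [hKc, ← hs]
    exact ((WithLp.linearEquiv 2 ℂ (Fin d → ℂ)).ofSubmodule' _).finrank_eq
  -- the kernel of `A` is contained in the kernel of `Aᴴ`
  have hker : ∀ x : E, x ∈ K → Aᴴ *ᵥ x = 0 := by
    intro x hx
    have hAx : A *ᵥ (x : Fin d → ℂ) = 0 := (hKmem x).1 hx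
    have h0 : star (x : Fin d → ℂ) ⬝ᵥ (((2 * Complex.I)⁻¹ • (A - Aᴴ)) *ᵥ x) = 0 := by
      have h1 : star (x : Fin d → ℂ) ⬝ᵥ (Aᴴ *ᵥ x) = 0 := by
        rw [dotProduct_mulVec, ← star_mulVec, hAx]
        simp
      rw [smul_mulVec, dotProduct_smul, sub_mulVec, dotProduct_sub, hAx, h1]
      simp
    have h2 := (hA.dotProduct_mulVec_zero_iff x).1 h0
    have h3 : ((2 * Complex.I)⁻¹ : ℂ) ≠ 0 := by
      simp [Complex.I_ne_zero]
    have h4 : (A - Aᴴ) *ᵥ x = 0 := by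
      rw [smul_mulVec] at h2
      exact (smul_eq_zero_iff_right h3).mp h2
    rw [sub_mulVec, hAx, zero_sub, neg_eq_zero] at h4
    exact h4
  have hE : Module.finrank ℂ E = d := by
    simpa [E] using finrank_euclideanSpace (𝕜 := ℂ) (ι := Fin d)
  have hsd : s ≤ d := by
    have := Submodule.finrank_le K
    omega
  have hrankKo : Module.finrank ℂ (Kᗮ) = d - s := by
    have := Submodule.finrank_add_finrank_orthogonal K
    omega
  -- an orthonormal family adapted to the decomposition `K ⊕ Kᗮ`
  let b₁ : OrthonormalBasis (Fin s) ℂ K :=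
    (stdOrthonormalBasis ℂ K).reindex (finCongr hKrank)
  let b₂ : OrthonormalBasis (Fin (d - s)) ℂ (Kᗮ) :=
    (stdOrthonormalBasis ℂ (Kᗮ)).reindex (finCongr hrankKo)
  let v : Fin s ⊕ Fin (d - s) → E := Sum.elim (fun i => (b₁ i : E)) (fun j => (b₂ j : E))
  have hvK : ∀ i, v (Sum.inl i) ∈ K := fun i => (b₁ i).2
  have hvKo : ∀ j, v (Sum.inr j) ∈ Kᗮ := fun j => (b₂ j).2
  have hinner : ∀ p q : E, ⟪p, q⟫_ℂ = star (p : Fin d → ℂ) ⬝ᵥ (q : Fin d → ℂ) :=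
    fun p q => by rw [EuclideanSpace.inner_eq_star_dotProduct, dotProduct_comm]
  have hv : Orthonormal ℂ v := by
    constructor
    · rintro (i | j)
      · exact b₁.orthonormal.1 i
      · exact b₂.orthonormal.1 j
    · rintro (i | j) (i' | j') hne
      · have hii : i ≠ i' := by rintro rfl; exact hne rfl
        simpa [v, Submodule.coe_inner] using b₁.orthonormal.2 hii
      · exact Submodule.inner_right_of_mem_orthogonal (hvK i) (hvKo j')
      · exact Submodule.inner_left_of_mem_orthogonal (hvK i') (hvKo j)
      · have hjj : j ≠ j' := by rintro rfl; exact hne rfl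
        simpa [v, Submodule.coe_inner] using b₂.orthonormal.2 hjj
  -- the unitary matrix whose columns are the vectors `v`
  let e : (Fin s ⊕ Fin (d - s)) ≃ Fin d := finSumFinEquiv.trans (finCongr (by omega))
  let U : Matrix (Fin d) (Fin d) ℂ := Matrix.of fun k j => v (e.symm j) k
  have hUU : Uᴴ * U = 1 := by
    ext i j
    have h1 : (Uᴴ * U) i j = ⟪v (e.symm i), v (e.symm j)⟫_ℂ := by
      rw [hinner]
      simp [Matrix.mul_apply, Matrix.conjTranspose_apply, U, dotProduct]
    rw [h1, orthonormal_iff_ite.mp hv]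
    simp [Matrix.one_apply, EmbeddingLike.apply_eq_iff_eq]
  have hUmem : U ∈ Matrix.unitaryGroup (Fin d) ℂ := by
    rw [Matrix.mem_unitaryGroup_iff']
    exact hUU
  -- entries of the conjugated matrix
  have hMent : ∀ i j, (Uᴴ * A * U) i j =
      star (v (e.symm i) : Fin d → ℂ) ⬝ᵥ (A *ᵥ (v (e.symm j) : Fin d → ℂ)) := by
    intro i j
    simp only [Matrix.mul_apply, Matrix.conjTranspose_apply, U, Matrix.of_apply,
      dotProduct, Matrix.mulVec, Finset.sum_mul, Finset.mul_sum]
    rw [Finset.sum_comm]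
    refine Finset.sum_congr rfl fun k _ => Finset.sum_congr rfl fun l _ => ?_
    simp [Pi.star_apply]
    ring
  have hrow : ∀ (a : Fin s) (j : Fin d), (Uᴴ * A * U) (e (Sum.inl a)) j = 0 := by
    intro a j
    rw [hMent, dotProduct_mulVec]
    have h1 : star (v (e.symm (e (Sum.inl a))) : Fin d → ℂ) ᵥ* A = 0 := by
      have h2 : star (v (Sum.inl a) : Fin d → ℂ) ᵥ* A = star (Aᴴ *ᵥ (v (Sum.inl a) : Fin d → ℂ)) := by
        rw [star_mulVec, Matrix.conjTranspose_conjTranspose]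
      rw [Equiv.symm_apply_apply, h2, hker _ (hvK a)]
      simp
    rw [h1, zero_dotProduct]
  have hcol : ∀ (i : Fin d) (b : Fin s), (Uᴴ * A * U) i (e (Sum.inl b)) = 0 := by
    intro i b
    rw [hMent, Equiv.symm_apply_apply]
    rw [(hKmem _).1 (hvK b), dotProduct_zero]
  -- the lower-right block
  let C : Matrix (Fin (d - s)) (Fin (d - s)) ℂ :=
    Matrix.of fun a b => (Uᴴ * A * U) (e (Sum.inr a)) (e (Sum.inr b))
  have hfinal : Uᴴ * A * U = Matrix.submatrix (Matrix.fromBlocks 0 0 0 C) e.symm e.symm := by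
    ext i j
    rw [← e.apply_symm_apply i, ← e.apply_symm_apply j]
    rcases e.symm i with a | a <;> rcases e.symm j with b | b
    · simp [hrow]
    · simp [hrow]
    · simp [hcol]
    · simp [C]
  -- the imaginary part of `C` is positive semidefinite
  have hCim : ((2 * Complex.I)⁻¹ • (C - Cᴴ)) =
      (Uᴴ * ((2 * Complex.I)⁻¹ • (A - Aᴴ)) * U).submatrix (e ∘ Sum.inr) (e ∘ Sum.inr) := by
    have h1 : Uᴴ * ((2 * Complex.I)⁻¹ • (A - Aᴴ)) * U =
        (2 * Complex.I)⁻¹ • (Uᴴ * A * U - (Uᴴ * A * U)ᴴ) := by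
      rw [Matrix.mul_smul, Matrix.smul_mul]
      congr 1
      simp only [Matrix.mul_sub, Matrix.sub_mul, Matrix.conjTranspose_mul,
        Matrix.conjTranspose_conjTranspose, Matrix.mul_assoc]
    rw [h1]
    have h2 : C = (Uᴴ * A * U).submatrix (e ∘ Sum.inr) (e ∘ Sum.inr) := rfl
    rw [h2]
    rfl
  have hCpsd : ((2 * Complex.I)⁻¹ • (C - Cᴴ)).PosSemidef := by
    rw [hCim]
    exact (hA.conjTranspose_mul_mul_same U).submatrix _
  -- `C` is invertible
  have hCdet : IsUnit C.det := by
    rw [isUnit_iff_ne_zero]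
    intro hdet
    obtain ⟨x, hx0, hCx⟩ := (Matrix.exists_mulVec_eq_zero_iff).2 hdet
    set z : Fin d → ℂ := fun k => Sum.elim (0 : Fin s → ℂ) x (e.symm k) with hz
    have hze : z ∘ e = Sum.elim (0 : Fin s → ℂ) x := by
      funext p; simp [z]
    have hMz : (Uᴴ * A * U) *ᵥ z = 0 := by
      rw [hfinal]
      have := Matrix.submatrix_mulVec_equiv (Matrix.fromBlocks 0 0 0 C) z e.symm e.symm
      rw [this]
      have h2 : z ∘ (e.symm).symm = Sum.elim (0 : Fin s → ℂ) x := by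
        simpa using hze
      rw [h2, Matrix.fromBlocks_mulVec]
      simp [hCx]
    have hAUz : A *ᵥ (U *ᵥ z) = 0 := by
      have h1 : U *ᵥ ((Uᴴ * A * U) *ᵥ z) = 0 := by rw [hMz, Matrix.mulVec_zero]
      rw [Matrix.mulVec_mulVec, ← Matrix.mul_assoc, ← Matrix.mul_assoc,
        mul_eq_one_comm.mp hUU] at h1
      rw [Matrix.mulVec_mulVec]
      simpa [Matrix.mul_assoc] using h1
    set y : E := WithLp.toLp 2 (U *ᵥ z : Fin d → ℂ) with hy
    have hUzK : y ∈ K := (hKmem _).2 hAUz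
    have hUzKo : y ∈ Kᗮ := by
      rw [Submodule.mem_orthogonal]
      intro u hu
      have h1 : ⟪u, y⟫_ℂ = ∑ j, z j * ⟪u, v (e.symm j)⟫_ℂ := by
        simp only [hinner, y, Matrix.mulVec, dotProduct, U, Matrix.of_apply,
          Finset.mul_sum, Pi.star_apply]
        rw [Finset.sum_comm]
        refine Finset.sum_congr rfl fun j _ => ?_
        exact Finset.sum_congr rfl fun k _ => by ring
      rw [h1]
      refine Finset.sum_eq_zero fun j _ => ?_
      rcases hj : e.symm j with a | b
      · simp [z, hj]
      · have h2 : ⟪u, v (Sum.inr b)⟫_ℂ = 0 :=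
          Submodule.inner_right_of_mem_orthogonal hu (hvKo b)
        rw [h2, mul_zero]
    have hUz0 : y = 0 := by
      have := hUzKo y hUzK
      exact inner_self_eq_zero.mp this
    have hz0 : z = 0 := by
      have h1 : (Uᴴ * U) *ᵥ z = Uᴴ *ᵥ (U *ᵥ z) := (Matrix.mulVec_mulVec _ _ _).symm
      rw [hUU, Matrix.one_mulVec] at h1
      have h2 : (U *ᵥ z : Fin d → ℂ) = 0 := congrArg WithLp.ofLp hUz0
      rw [h2, Matrix.mulVec_zero] at h1
      exact h1
    apply hx0
    funext b
    have : z (e (Sum.inr b)) = x b := by simp [z]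
    rw [hz0] at this
    exact this.symm
  exact ⟨U, hUmem, C, e, hCdet, hCpsd, hfinal⟩
end

section
/- Let p ∈ ℂ[z₁, …, z_n] be a stable polynomial. Then for all x ∈ ℝⁿ and all y ∈ ℝⁿ with y_j > 0 for every j, |p(x + iy)| ≥ |p(x − iy)|, where x ± iy denotes the point (x₁ ± iy₁, …, x_n ± iy_n) ∈ ℂⁿ. -/
open MvPolynomial

lemma multiset_prod_le {s : Multiset ℂ} {f g : ℂ → ℝ} (h0 : ∀ r, 0 ≤ f r)
    (h : ∀ r ∈ s, f r ≤ g r) : (s.map f).prod ≤ (s.map g).prod := by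
  induction s using Multiset.induction_on with
  | empty => simp
  | cons a s ih =>
    simp only [Multiset.map_cons, Multiset.prod_cons]
    have hfs : 0 ≤ (s.map f).prod :=
      Multiset.prod_nonneg (by intro x hx; obtain ⟨r, _, rfl⟩ := Multiset.mem_map.mp hx; exact h0 r)
    exact mul_le_mul (h a (Multiset.mem_cons_self a s))
      (ih fun r hr => h r (Multiset.mem_cons_of_mem hr)) hfs
      (le_trans (h0 a) (h a (Multiset.mem_cons_self a s)))

lemma univ_abs_ge (q : Polynomial ℂ) (hq : ∀ t : ℂ, 0 < t.im → q.eval t ≠ 0) :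
    ‖q.eval Complex.I‖ ≥ ‖q.eval (-Complex.I)‖ := by
  by_cases h0 : q = 0
  · simp [h0]
  have hsplit := Polynomial.splits_iff_card_roots.mp (IsAlgClosed.splits q)
  have hfac := Polynomial.C_leadingCoeff_mul_prod_multiset_X_sub_C hsplit
  have habs : ∀ t : ℂ, ‖q.eval t‖ =
      ‖q.leadingCoeff‖ * (q.roots.map fun r => ‖t - r‖).prod := by
    intro t
    conv_lhs => rw [← hfac]
    rw [Polynomial.eval_mul, Polynomial.eval_C, norm_mul]
    congr 1
    rw [Polynomial.eval_multiset_prod, Multiset.map_map,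
      ← normHom_apply, map_multiset_prod (normHom : ℂ →*₀ ℝ), Multiset.map_map]
    simp [Function.comp]
  rw [ge_iff_le, habs, habs]
  apply mul_le_mul_of_nonneg_left _ (norm_nonneg _)
  apply multiset_prod_le (fun r => norm_nonneg _)
  intro r hr
  have hroot : q.eval r = 0 := Polynomial.isRoot_of_mem_roots hr
  have him : r.im ≤ 0 := by
    by_contra h
    exact hq r (lt_of_not_ge h) hroot
  have hsq : ‖-Complex.I - r‖ ^ 2 ≤ ‖Complex.I - r‖ ^ 2 := by
    rw [Complex.sq_norm, Complex.sq_norm, Complex.normSq_apply, Complex.normSq_apply]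
    simp only [Complex.sub_re, Complex.sub_im, Complex.neg_im, Complex.neg_re,
      Complex.I_re, Complex.I_im]
    nlinarith
  exact (pow_le_pow_iff_left₀ (norm_nonneg _) (norm_nonneg _) two_ne_zero).mp hsq

theorem abs_ge_of_reflect (n : ℕ) (p : MvPolynomial (Fin n) ℂ)
    (hstable : ∀ z : Fin n → ℂ, (∀ j, 0 < (z j).im) → eval z p ≠ 0) :
    ∀ (x y : Fin n → ℝ), (∀ j, 0 < y j) →
      ‖eval (fun j => (x j : ℂ) + Complex.I * (y j : ℂ)) p‖ ≥
        ‖eval (fun j => (x j : ℂ) - Complex.I * (y j : ℂ)) p‖ := by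
  intro x y hy
  set q : Polynomial ℂ :=
    eval₂ Polynomial.C (fun j => Polynomial.C (x j : ℂ) + Polynomial.C (y j : ℂ) * Polynomial.X) p
    with hqdef
  have key : ∀ t : ℂ, q.eval t = eval (fun j => (x j : ℂ) + (y j : ℂ) * t) p := by
    intro t
    rw [hqdef, show (Polynomial.eval t : Polynomial ℂ → ℂ) = ⇑(Polynomial.evalRingHom t) from rfl,
      MvPolynomial.eval₂_comp_left]
    have hc : (Polynomial.evalRingHom t).comp Polynomial.C = RingHom.id ℂ := by
      ext a; simp
    rw [hc, MvPolynomial.eval₂_id]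
    have harg : (⇑(Polynomial.evalRingHom t) ∘
        fun j => Polynomial.C (x j : ℂ) + Polynomial.C (y j : ℂ) * Polynomial.X) =
        fun j => (x j : ℂ) + (y j : ℂ) * t := by
      funext j; simp
    rw [harg]
  have hq : ∀ t : ℂ, 0 < t.im → q.eval t ≠ 0 := by
    intro t ht
    rw [key]
    apply hstable
    intro j
    simp only [Complex.add_im, Complex.ofReal_im, Complex.mul_im, Complex.ofReal_re,
      zero_add, zero_mul, add_zero]
    exact mul_pos (hy j) ht
  have h := univ_abs_ge q hq
  rw [key, key] at h
  have e1 : (fun j => (x j : ℂ) + (y j : ℂ) * Complex.I) =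
      (fun j => (x j : ℂ) + Complex.I * (y j : ℂ)) := by
    funext j; ring
  have e2 : (fun j => (x j : ℂ) + (y j : ℂ) * (-Complex.I)) =
      (fun j => (x j : ℂ) - Complex.I * (y j : ℂ)) := by
    funext j; ring
  rw [e1, e2] at h
  exact h
end

section
/- Let p ∈ ℂ[z₁, …, z_n] be a stable polynomial. Then for all x ∈ ℝⁿ and all y, ỹ ∈ ℝⁿ with 0 ≤ y_j ≤ ỹ_j for every j, |p(x + iy)| ≤ |p(x + iỹ)|, where x + iy denotes the point (x₁ + iy₁, …, x_n + iy_n) ∈ ℂⁿ. -/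
open MvPolynomial

lemma uni_abs_mono (q : Polynomial ℂ) (hq : ∀ z : ℂ, 0 < z.im → q.eval z ≠ 0)
    (x y yt : ℝ) (hy : 0 ≤ y) (hyt : y ≤ yt) :
    ‖q.eval ((x : ℂ) + Complex.I * y)‖ ≤
      ‖q.eval ((x : ℂ) + Complex.I * yt)‖ := by
  have hq0 : q ≠ 0 := by
    intro h
    exact hq Complex.I (by simp) (by simp [h])
  have hfac := (IsAlgClosed.splits q).eq_prod_roots
  have key : ∀ w : ℂ, ‖q.eval w‖ =
      ‖q.leadingCoeff‖ * ((q.roots.map fun a => ‖w - a‖).prod) := by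
    intro w
    conv_lhs => rw [hfac]
    have hn : ∀ s : Multiset ℂ, ‖s.prod‖ = (s.map (‖·‖)).prod :=
      fun s => (Multiset.prod_hom s (normHom (α := ℂ))).symm
    rw [Polynomial.eval_mul, Polynomial.eval_C, norm_mul, Polynomial.eval_multiset_prod,
      Multiset.map_map, hn, Multiset.map_map]
    simp [Function.comp]
  rw [key, key]
  apply mul_le_mul_of_nonneg_left _ (norm_nonneg _)
  apply Multiset.prod_map_le_prod_map₀
  · intro a _; exact norm_nonneg _
  · intro a ha
    have him : a.im ≤ 0 := by
      by_contra h
      exact hq a (lt_of_not_ge h) (Polynomial.isRoot_of_mem_roots ha)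
    rw [Complex.norm_def, Complex.norm_def]
    apply Real.sqrt_le_sqrt
    simp only [Complex.normSq_apply, Complex.sub_re, Complex.sub_im, Complex.add_re,
      Complex.add_im, Complex.ofReal_re, Complex.ofReal_im, Complex.mul_re, Complex.mul_im,
      Complex.I_re, Complex.I_im]
    nlinarith [sq_nonneg (y - a.im), sq_nonneg (yt - a.im)]

lemma eval_aeval_poly {n : ℕ} (g : Fin n → Polynomial ℂ) (z : ℂ) (p : MvPolynomial (Fin n) ℂ) :
    Polynomial.eval z (MvPolynomial.aeval g p) =
      MvPolynomial.eval (fun i => (g i).eval z) p := by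
  induction p using MvPolynomial.induction_on with
  | C a => simp
  | add p q hp hq => simp [hp, hq]
  | mul_X p i hp => simp [hp]

lemma chain_abs_mono (n : ℕ) (p : MvPolynomial (Fin n) ℂ)
    (hstable : ∀ z : Fin n → ℂ, (∀ j, 0 < (z j).im) → eval z p ≠ 0)
    (x y yt : Fin n → ℝ) (ε : ℝ) (hε : 0 < ε) (hy : ∀ j, 0 ≤ y j) (hyt : ∀ j, y j ≤ yt j) :
    ‖eval (fun j => (x j : ℂ) + Complex.I * ((y j + ε : ℝ) : ℂ)) p‖ ≤
      ‖eval (fun j => (x j : ℂ) + Complex.I * ((yt j + ε : ℝ) : ℂ)) p‖ := by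
  set A : Fin n → ℂ := fun j => (x j : ℂ) + Complex.I * ((y j + ε : ℝ) : ℂ) with hA
  set B : Fin n → ℂ := fun j => (x j : ℂ) + Complex.I * ((yt j + ε : ℝ) : ℂ) with hB
  set w : ℕ → Fin n → ℂ := fun k j => if (j : ℕ) < k then B j else A j with hw
  have himA : ∀ j, 0 < (A j).im := by
    intro j; simp [hA]; linarith [hy j]
  have himB : ∀ j, 0 < (B j).im := by
    intro j; simp [hB]; linarith [hy j, hyt j]
  have himw : ∀ k j, 0 < (w k j).im := by
    intro k j; simp only [hw]; split <;> [exact himB j; exact himA j]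
  have claim : ∀ k, k ≤ n → ‖eval A p‖ ≤ ‖eval (w k) p‖ := by
    intro k
    induction k with
    | zero => intro _; simp [hw]
    | succ k ih =>
      intro hk
      have hk' : k < n := hk
      set kk : Fin n := ⟨k, hk'⟩ with hkk
      refine le_trans (ih (le_of_lt hk')) ?_
      set q : Polynomial ℂ :=
        MvPolynomial.aeval (fun i => if i = kk then Polynomial.X else Polynomial.C (w k i)) p
        with hq
      have hqe : ∀ z : ℂ, q.eval z = eval (fun i => if i = kk then z else w k i) p := by
        intro z
        rw [hq, eval_aeval_poly]
        have hfun : (fun i => Polynomial.eval z (if i = kk then Polynomial.X else Polynomial.C (w k i)))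
            = fun i => if i = kk then z else w k i := by
          funext i
          by_cases h : i = kk <;> simp [h]
        rw [hfun]
      have hqs : ∀ z : ℂ, 0 < z.im → q.eval z ≠ 0 := by
        intro z hz
        rw [hqe]
        apply hstable
        intro j
        by_cases h : j = kk
        · simp [h, hz]
        · simpa [h] using himw k j
      have e1 : eval (w k) p = q.eval ((x kk : ℂ) + Complex.I * ((y kk + ε : ℝ) : ℂ)) := by
        rw [hqe]
        have hfun : w k = fun i => if i = kk then (x kk : ℂ) + Complex.I * ((y kk + ε : ℝ) : ℂ) else w k i := by
          funext i
          by_cases h : i = kk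
          · rw [if_pos h, h]
            have hnl : ¬ ((kk : ℕ) < k) := by simp [hkk]
            simp [hw, hnl, hA]
          · simp [h]
        rw [← hfun]
      have e2 : eval (w (k + 1)) p =
          q.eval ((x kk : ℂ) + Complex.I * ((yt kk + ε : ℝ) : ℂ)) := by
        rw [hqe]
        have hfun : w (k + 1) = fun i => if i = kk then (x kk : ℂ) + Complex.I * ((yt kk + ε : ℝ) : ℂ) else w k i := by
          funext i
          by_cases h : i = kk
          · rw [if_pos h, h]
            have hl : (kk : ℕ) < k + 1 := by simp [hkk]
            simp [hw, hl, hB]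
          · have hne : (i : ℕ) ≠ k := by
              intro hc; exact h (Fin.ext hc)
            have hiff : ((i : ℕ) < k + 1) ↔ ((i : ℕ) < k) := by omega
            simp [h, hw, hiff]
        rw [← hfun]
      rw [e1, e2]
      exact uni_abs_mono q hqs (x kk) (y kk + ε) (yt kk + ε)
        (by linarith [hy kk]) (by linarith [hyt kk])
  have := claim n (le_refl n)
  have hwn : w n = B := by
    funext j; simp [hw, j.isLt]
  rwa [hwn] at this

theorem abs_mono_in_imaginary_part (n : ℕ) (p : MvPolynomial (Fin n) ℂ)
    (hstable : ∀ z : Fin n → ℂ, (∀ j, 0 < (z j).im) → eval z p ≠ 0) :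
    ∀ (x y ytilde : Fin n → ℝ), (∀ j, 0 ≤ y j) → (∀ j, y j ≤ ytilde j) →
      ‖eval (fun j => (x j : ℂ) + Complex.I * (y j : ℂ)) p‖ ≤
        ‖eval (fun j => (x j : ℂ) + Complex.I * (ytilde j : ℂ)) p‖ := by
  intro x y yt hy hyt
  set R : (Fin n → ℝ) → Polynomial ℂ := fun v =>
    MvPolynomial.aeval (fun j => Polynomial.C ((x j : ℂ) + Complex.I * (v j : ℂ)) +
      Polynomial.C Complex.I * Polynomial.X) p with hR
  have hRe : ∀ (v : Fin n → ℝ) (ε : ℝ),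
      (R v).eval (ε : ℂ) = eval (fun j => (x j : ℂ) + Complex.I * ((v j + ε : ℝ) : ℂ)) p := by
    intro v ε
    rw [hR, eval_aeval_poly]
    have hfun : (fun j => Polynomial.eval (ε : ℂ) (Polynomial.C ((x j : ℂ) + Complex.I * (v j : ℂ)) +
        Polynomial.C Complex.I * Polynomial.X))
        = fun j => (x j : ℂ) + Complex.I * ((v j + ε : ℝ) : ℂ) := by
      funext j
      push_cast
      simp
      ring
    rw [hfun]
  have hcont : ∀ v : Fin n → ℝ, Continuous fun ε : ℝ => ‖(R v).eval (ε : ℂ)‖ :=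
    fun v => continuous_norm.comp ((R v).continuous.comp Complex.continuous_ofReal)
  have h0 : ∀ v : Fin n → ℝ,
      ‖(R v).eval ((0 : ℝ) : ℂ)‖ =
        ‖eval (fun j => (x j : ℂ) + Complex.I * (v j : ℂ)) p‖ := by
    intro v
    rw [hRe]
    norm_num
  have t1 : Filter.Tendsto (fun ε : ℝ => ‖(R y).eval (ε : ℂ)‖)
      (nhdsWithin 0 (Set.Ioi 0))
      (nhds (‖eval (fun j => (x j : ℂ) + Complex.I * (y j : ℂ)) p‖)) := by
    rw [← h0 y]
    exact ((hcont y).tendsto 0).mono_left nhdsWithin_le_nhds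
  have t2 : Filter.Tendsto (fun ε : ℝ => ‖(R yt).eval (ε : ℂ)‖)
      (nhdsWithin 0 (Set.Ioi 0))
      (nhds (‖eval (fun j => (x j : ℂ) + Complex.I * (yt j : ℂ)) p‖)) := by
    rw [← h0 yt]
    exact ((hcont yt).tendsto 0).mono_left nhdsWithin_le_nhds
  refine le_of_tendsto_of_tendsto t1 t2 ?_
  filter_upwards [eventually_mem_nhdsWithin] with ε hε
  rw [hRe, hRe]
  exact chain_abs_mono n p hstable x y yt ε hε hy hyt
end
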